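/- Let (x_n)_{n≥1} be a sequence in [0,1) and let 0 < α < 1. Suppose (x_n) has converging number variance for the exponent α, i.e. for every s > 0, lim_{N→∞} (1/N^{2−α}) · #{(l,m) : 1 ≤ l, m ≤ N, l ≠ m, ‖x_l − x_m‖ ≤ s/N^α} = 2s. Then (x_n) is uniformly distributed in [0,1); equivalently, lim_{N→∞} D_N*(x_n) = 0. -/

import Mathlib

open scoped Classical

/-- Distance from `x` to the nearest integer. -/
noncomputable def nint (x : ℝ) : ℝ := ⨅ k : ℤ, |x - (k : ℝ)|

/-- Number of ordered pairs `(l,m)`, `1 ≤ l,m ≤ N`, `l ≠ m`, with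
`‖x_l - x_m‖ ≤ r`. -/
noncomputable def pairCountLe (x : ℕ → ℝ) (N : ℕ) (r : ℝ) : ℕ :=
  (((Finset.Icc 1 N) ×ˢ (Finset.Icc 1 N)).filter
    (fun p => p.1 ≠ p.2 ∧ nint (x p.1 - x p.2) ≤ r)).card

/-- Star-discrepancy of the first `N` points of a sequence in `[0,1)`. -/
noncomputable def starDiscrepancy (N : ℕ) (x : ℕ → ℝ) : ℝ :=
  sSup {v : ℝ | ∃ b : ℝ, 0 < b ∧ b ≤ 1 ∧
    v = |(((Finset.Icc 1 N).filter (fun n => 0 ≤ x n ∧ x n < b)).card : ℝ) / N - b|}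

open Finset Filter

lemma nint_le (z : ℝ) (k : ℤ) : nint z ≤ |z - (k : ℝ)| := by
  have hbdd : BddBelow (Set.range fun k : ℤ => |z - (k : ℝ)|) :=
    ⟨0, by rintro y ⟨i, rfl⟩; exact abs_nonneg _⟩
  exact ciInf_le hbdd k

lemma nint_le_abs (z : ℝ) : nint z ≤ |z| := by
  simpa using nint_le z 0

/-- window index of the n-th point -/
noncomputable def uWin (x : ℕ → ℝ) (K n : ℕ) : ℕ := ⌊x n * K⌋₊

/-- number of points among the first N in a block of t windows starting at w -/
noncomputable def Sblk (x : ℕ → ℝ) (N K t w : ℕ) : ℕ :=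
  ((Finset.Icc 1 N).filter (fun n => w ≤ uWin x K n ∧ uWin x K n < w + t)).card

/-- number of points with window index in [p,q] -/
noncomputable def cnt (x : ℕ → ℝ) (N K p q : ℕ) : ℕ :=
  ((Finset.Icc 1 N).filter (fun n => p ≤ uWin x K n ∧ uWin x K n ≤ q)).card

lemma lemA (x : ℕ → ℝ) (N K t p q : ℕ) (ht : 1 ≤ t) :
    t * cnt x N K (p + (t - 1)) q ≤ ∑ w ∈ Finset.Icc p q, Sblk x N K t w := by
  have hS : ∀ w, Sblk x N K t w
      = ∑ n ∈ Finset.Icc 1 N, if w ≤ uWin x K n ∧ uWin x K n < w + t then 1 else 0 := by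
    intro w; simp only [Sblk, Finset.card_filter]
  rw [Finset.sum_congr rfl (fun w _ => hS w), Finset.sum_comm]
  have hcnt : t * cnt x N K (p + (t-1)) q
      = ∑ n ∈ Finset.Icc 1 N, if p + (t-1) ≤ uWin x K n ∧ uWin x K n ≤ q then t else 0 := by
    simp only [cnt, Finset.card_filter, Finset.mul_sum, mul_ite, mul_one, mul_zero]
  rw [hcnt]
  apply Finset.sum_le_sum
  intro n _
  by_cases hg : p + (t-1) ≤ uWin x K n ∧ uWin x K n ≤ q
  · rw [if_pos hg]
    set u := uWin x K n with hu
    have hsub : Finset.Icc (u + 1 - t) u ⊆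
        (Finset.Icc p q).filter (fun w => w ≤ u ∧ u < w + t) := by
      intro w hw
      simp only [Finset.mem_Icc] at hw
      simp only [Finset.mem_filter, Finset.mem_Icc]
      omega
    calc (t : ℕ) = (Finset.Icc (u + 1 - t) u).card := by
          rw [Nat.card_Icc]; omega
      _ ≤ ((Finset.Icc p q).filter (fun w => w ≤ u ∧ u < w + t)).card :=
          Finset.card_le_card hsub
      _ = ∑ w ∈ Finset.Icc p q, if w ≤ u ∧ u < w + t then 1 else 0 := by
          rw [Finset.card_filter]
  · rw [if_neg hg]
    positivity

lemma lemStrip (x : ℕ → ℝ) (hx0 : ∀ n, 0 ≤ x n) (N K t p q : ℕ) (c : ℝ)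
    (hc0 : 0 < c) (hcK : c ≤ K) (hspan : q + 1 ≤ p + t) :
    cnt x N K p q * cnt x N K p q ≤ pairCountLe x N ((t : ℝ) / c) + cnt x N K p q := by
  classical
  set s := (Finset.Icc 1 N).filter (fun n => p ≤ uWin x K n ∧ uWin x K n ≤ q) with hs
  have hK0 : (0:ℝ) < K := lt_of_lt_of_le hc0 hcK
  have hsub : (s ×ˢ s).filter (fun p' => p'.1 ≠ p'.2)
      ⊆ ((Finset.Icc 1 N) ×ˢ (Finset.Icc 1 N)).filter
        (fun p' => p'.1 ≠ p'.2 ∧ nint (x p'.1 - x p'.2) ≤ (t : ℝ) / c) := by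
    rintro ⟨l, m⟩ hlm
    rw [Finset.mem_filter, Finset.mem_product] at hlm
    obtain ⟨⟨hls, hms⟩, hne⟩ := hlm
    rw [hs, Finset.mem_filter] at hls hms
    obtain ⟨hl, hl2⟩ := hls
    obtain ⟨hm, hm2⟩ := hms
    rw [Finset.mem_filter, Finset.mem_product]
    refine ⟨⟨hl, hm⟩, hne, ?_⟩
    have hfl1 : (p : ℝ) ≤ x l * K := le_trans (by exact_mod_cast hl2.1) (Nat.floor_le (mul_nonneg (hx0 _) (Nat.cast_nonneg K)))
    have hfl2 : x l * K < q + 1 := lt_of_lt_of_le (Nat.lt_floor_add_one _)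
      (by exact_mod_cast Nat.add_le_add_right hl2.2 1)
    have hfm1 : (p : ℝ) ≤ x m * K := le_trans (by exact_mod_cast hm2.1) (Nat.floor_le (mul_nonneg (hx0 _) (Nat.cast_nonneg K)))
    have hfm2 : x m * K < q + 1 := lt_of_lt_of_le (Nat.lt_floor_add_one _)
      (by exact_mod_cast Nat.add_le_add_right hm2.2 1)
    have habs : |x l - x m| * K ≤ (t : ℝ) := by
      have h1 : |x l - x m| * K = |x l * K - x m * K| := by
        rw [← sub_mul, abs_mul, abs_of_pos hK0]
      have hq : (q:ℝ) + 1 ≤ (p:ℝ) + t := by exact_mod_cast hspan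
      rw [h1, abs_sub_le_iff]
      constructor <;> linarith
    refine le_trans (nint_le_abs _) ?_
    rw [le_div_iff₀ hc0]
    calc |x l - x m| * c ≤ |x l - x m| * K :=
        mul_le_mul_of_nonneg_left hcK (abs_nonneg _)
      _ ≤ (t : ℝ) := habs
  have hdiag : ((s ×ˢ s).filter (fun p' => p'.1 = p'.2)).card ≤ s.card := by
    apply Finset.card_le_card_of_injOn (fun p' => p'.1)
    · rintro ⟨a, b⟩ hab
      rw [Finset.mem_coe, Finset.mem_filter, Finset.mem_product] at hab
      exact hab.1.1
    · rintro ⟨a, b⟩ ha ⟨a', b'⟩ ha' h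
      rw [Finset.mem_coe, Finset.mem_filter, Finset.mem_product] at ha ha'
      have hab : a = b := ha.2
      have hab' : a' = b' := ha'.2
      dsimp at h
      subst h; subst hab; subst hab'; rfl
  have hsplit := Finset.card_filter_add_card_filter_not
    (s := s ×ˢ s) (p := fun p' => p'.1 = p'.2)
  have hcard : (s ×ˢ s).card = s.card * s.card := Finset.card_product s s
  have hne_le : ((s ×ˢ s).filter (fun p' => ¬ p'.1 = p'.2)).card ≤ pairCountLe x N ((t:ℝ)/c) :=
    Finset.card_le_card hsub
  show s.card * s.card ≤ pairCountLe x N ((t:ℝ)/c) + s.card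
  calc s.card * s.card = (s ×ˢ s).card := (Finset.card_product s s).symm
    _ = ((s ×ˢ s).filter (fun p' => p'.1 = p'.2)).card
        + ((s ×ˢ s).filter (fun p' => ¬ p'.1 = p'.2)).card := hsplit.symm
    _ ≤ s.card + pairCountLe x N ((t:ℝ)/c) := add_le_add hdiag hne_le
    _ = pairCountLe x N ((t:ℝ)/c) + s.card := add_comm _ _

lemma lemPair (x : ℕ → ℝ) (hx0 : ∀ n, 0 ≤ x n) (K t : ℕ) (c : ℝ)
    (hc0 : 0 < c) (hcK : c ≤ K) (l m : ℕ) :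
    ((Finset.range K).filter (fun w => (w ≤ uWin x K l ∧ uWin x K l < w + t)
      ∧ (w ≤ uWin x K m ∧ uWin x K m < w + t))).card
    ≤ ((Finset.range t).filter
        (fun r : ℕ => l = m ∨ nint (x l - x m) ≤ ((r : ℝ) + 1) / c)).card := by
  classical
  have hK0 : (0:ℝ) < K := lt_of_lt_of_le hc0 hcK
  set ul := uWin x K l with hul
  set um := uWin x K m with hum
  set D := max ul um - min ul um with hD
  have hsub : ((Finset.range K).filter (fun w => (w ≤ ul ∧ ul < w + t)
      ∧ (w ≤ um ∧ um < w + t))) ⊆ Finset.Icc (max ul um + 1 - t) (min ul um) := by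
    intro w hw
    rw [Finset.mem_filter, Finset.mem_range] at hw
    rw [Finset.mem_Icc]
    omega
  have hcard1 : ((Finset.range K).filter (fun w => (w ≤ ul ∧ ul < w + t)
      ∧ (w ≤ um ∧ um < w + t))).card ≤ t - D := by
    refine le_trans (Finset.card_le_card hsub) ?_
    rw [Nat.card_Icc]
    omega
  by_cases hlm : l = m
  · rw [Finset.filter_true_of_mem (fun r _ => Or.inl hlm), Finset.card_range]
    omega
  · have hIco : Finset.Ico D t ⊆ (Finset.range t).filter
        (fun r : ℕ => l = m ∨ nint (x l - x m) ≤ ((r : ℝ) + 1) / c) := by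
      intro r hr
      rw [Finset.mem_Ico] at hr
      rw [Finset.mem_filter, Finset.mem_range]
      refine ⟨hr.2, Or.inr ?_⟩
      have hl1 : ((min ul um : ℕ) : ℝ) ≤ x l * K := by
        refine le_trans ?_ (Nat.floor_le (mul_nonneg (hx0 _) (Nat.cast_nonneg K)))
        exact_mod_cast min_le_left ul um
      have hl2 : x l * K < ((max ul um : ℕ) : ℝ) + 1 := by
        refine lt_of_lt_of_le (Nat.lt_floor_add_one _) ?_
        exact_mod_cast Nat.add_le_add_right (le_max_left ul um) 1
      have hm1 : ((min ul um : ℕ) : ℝ) ≤ x m * K := by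
        refine le_trans ?_ (Nat.floor_le (mul_nonneg (hx0 _) (Nat.cast_nonneg K)))
        exact_mod_cast min_le_right ul um
      have hm2 : x m * K < ((max ul um : ℕ) : ℝ) + 1 := by
        refine lt_of_lt_of_le (Nat.lt_floor_add_one _) ?_
        exact_mod_cast Nat.add_le_add_right (le_max_right ul um) 1
      have hDcast : ((D : ℕ) : ℝ) = ((max ul um : ℕ) : ℝ) - ((min ul um : ℕ) : ℝ) := by
        rw [hD]
        push_cast [Nat.cast_sub (min_le_max (a := ul) (b := um))]
        ring
      have habs : |x l - x m| * K ≤ (D : ℝ) + 1 := by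
        have h1 : |x l - x m| * K = |x l * K - x m * K| := by
          rw [← sub_mul, abs_mul, abs_of_pos hK0]
        rw [h1, abs_sub_le_iff, hDcast]
        constructor <;> linarith
      have h2 : |x l - x m| ≤ ((D : ℝ) + 1) / K := by
        rw [le_div_iff₀ hK0]
        exact habs
      refine le_trans (nint_le_abs _) (le_trans h2 ?_)
      apply div_le_div₀ (by positivity) ?_ hc0 hcK
      have : (D : ℝ) ≤ (r : ℝ) := Nat.cast_le.mpr hr.1
      linarith
    refine le_trans hcard1 ?_
    refine le_trans ?_ (Finset.card_le_card hIco)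
    rw [Nat.card_Ico]

lemma lemUB (x : ℕ → ℝ) (hx0 : ∀ n, 0 ≤ x n) (N K t : ℕ) (c : ℝ)
    (hc0 : 0 < c) (hcK : c ≤ K) :
    ∑ w ∈ Finset.range K, Sblk x N K t w * Sblk x N K t w
    ≤ ∑ r ∈ Finset.range t, (pairCountLe x N (((r : ℝ) + 1) / c) + N) := by
  classical
  set sq := (Finset.Icc 1 N) ×ˢ (Finset.Icc 1 N) with hsq
  have hQ : ∀ w, Sblk x N K t w * Sblk x N K t w
      = ∑ p ∈ sq, if (w ≤ uWin x K p.1 ∧ uWin x K p.1 < w + t)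
          ∧ (w ≤ uWin x K p.2 ∧ uWin x K p.2 < w + t) then 1 else 0 := by
    intro w
    calc Sblk x N K t w * Sblk x N K t w
        = (((Finset.Icc 1 N).filter (fun n => w ≤ uWin x K n ∧ uWin x K n < w + t))
          ×ˢ ((Finset.Icc 1 N).filter (fun n => w ≤ uWin x K n ∧ uWin x K n < w + t))).card := by
          rw [Finset.card_product]; rfl
      _ = (sq.filter (fun p => (w ≤ uWin x K p.1 ∧ uWin x K p.1 < w + t)
            ∧ (w ≤ uWin x K p.2 ∧ uWin x K p.2 < w + t))).card := by
          rw [hsq, ← Finset.filter_product]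
      _ = _ := Finset.card_filter _ _
  calc ∑ w ∈ Finset.range K, Sblk x N K t w * Sblk x N K t w
      = ∑ p ∈ sq, ∑ w ∈ Finset.range K,
          if (w ≤ uWin x K p.1 ∧ uWin x K p.1 < w + t)
            ∧ (w ≤ uWin x K p.2 ∧ uWin x K p.2 < w + t) then 1 else 0 := by
        rw [Finset.sum_congr rfl (fun w _ => hQ w), Finset.sum_comm]
    _ = ∑ p ∈ sq, ((Finset.range K).filter (fun w => (w ≤ uWin x K p.1 ∧ uWin x K p.1 < w + t)
          ∧ (w ≤ uWin x K p.2 ∧ uWin x K p.2 < w + t))).card := by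
        refine Finset.sum_congr rfl (fun p _ => ?_)
        rw [Finset.card_filter]
    _ ≤ ∑ p ∈ sq, ((Finset.range t).filter
          (fun r : ℕ => p.1 = p.2 ∨ nint (x p.1 - x p.2) ≤ ((r : ℝ) + 1) / c)).card :=
        Finset.sum_le_sum (fun p _ => lemPair x hx0 K t c hc0 hcK p.1 p.2)
    _ = ∑ r ∈ Finset.range t, (sq.filter
          (fun p => p.1 = p.2 ∨ nint (x p.1 - x p.2) ≤ ((r : ℝ) + 1) / c)).card := by
        rw [Finset.sum_congr rfl (fun p _ => Finset.card_filter _ _), Finset.sum_comm]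
        exact Finset.sum_congr rfl (fun r _ => (Finset.card_filter _ _).symm)
    _ ≤ ∑ r ∈ Finset.range t, (pairCountLe x N (((r : ℝ) + 1) / c) + N) := by
        refine Finset.sum_le_sum (fun r _ => ?_)
        have hsplit : sq.filter (fun p => p.1 = p.2 ∨ nint (x p.1 - x p.2) ≤ ((r : ℝ) + 1) / c)
            ⊆ (sq.filter (fun p => p.1 ≠ p.2 ∧ nint (x p.1 - x p.2) ≤ ((r : ℝ) + 1) / c))
              ∪ (sq.filter (fun p => p.1 = p.2)) := by
          intro p hp
          rw [Finset.mem_filter] at hp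
          rw [Finset.mem_union, Finset.mem_filter, Finset.mem_filter]
          tauto
        have hdiag : (sq.filter (fun p => p.1 = p.2)).card ≤ N := by
          have : (sq.filter (fun p => p.1 = p.2)).card ≤ (Finset.Icc 1 N).card := by
            apply Finset.card_le_card_of_injOn (fun p => p.1)
            · rintro ⟨a, b⟩ hab
              rw [Finset.mem_coe, Finset.mem_filter, hsq, Finset.mem_product] at hab
              exact hab.1.1
            · rintro ⟨a, b⟩ ha ⟨a', b'⟩ ha' h
              rw [Finset.mem_coe, Finset.mem_filter] at ha ha'
              have hab : a = b := ha.2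
              have hab' : a' = b' := ha'.2
              dsimp at h
              subst h; subst hab; subst hab'; rfl
          simpa [Nat.card_Icc] using this
        refine le_trans (Finset.card_le_card hsplit) ?_
        refine le_trans (Finset.card_union_le _ _) ?_
        exact add_le_add (le_of_eq rfl) hdiag

lemma lemSI (x : ℕ → ℝ) (hx : ∀ n, x n ∈ Set.Ico (0:ℝ) 1) (N K t m : ℕ) (b c : ℝ)
    (hc0 : 0 < c) (hcK : c ≤ K) (hb0 : 0 < b) (hb1 : b < 1) (ht : 2 ≤ t)
    (hm : m = ⌊b * K⌋₊) :
    (t:ℝ)^2 * (max ((((Finset.Icc 1 N).filter (fun n => x n < b)).card : ℝ)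
        - (cnt x N K 0 (t-2) : ℝ)) 0)^2 / ((m:ℝ)+1)
    + (t:ℝ)^2 * (max ((N:ℝ) - (((Finset.Icc 1 N).filter (fun n => x n < b)).card : ℝ)
        - (cnt x N K m (m+t-1) : ℝ)) 0)^2 / ((K:ℝ) - m)
    ≤ ∑ r ∈ Finset.range t, ((pairCountLe x N (((r:ℝ)+1)/c) : ℝ) + N) := by
  classical
  have hK0 : (0:ℝ) < K := lt_of_lt_of_le hc0 hcK
  have hK1 : 1 ≤ K := by exact_mod_cast Nat.one_le_cast.mpr (by exact_mod_cast Nat.pos_of_ne_zero (by rintro rfl; simp at hK0))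
  have hu : ∀ n, uWin x K n < K := by
    intro n
    have h0 := (hx n).1
    have h1 := (hx n).2
    apply (Nat.floor_lt (mul_nonneg h0 (Nat.cast_nonneg K))).mpr
    nlinarith
  have hmK : m < K := by
    rw [hm]
    apply (Nat.floor_lt (by positivity)).mpr
    nlinarith
  set Ab := ((Finset.Icc 1 N).filter (fun n => x n < b)).card with hAbdef
  set A1 := cnt x N K (t-1) m with hA1def
  set A2 := cnt x N K (m+t) (K-1) with hA2def
  set E1 := cnt x N K 0 (t-2) with hE1def
  set E2 := cnt x N K m (m+t-1) with hE2def
  -- counting facts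
  have hAb : Ab ≤ A1 + E1 := by
    have hsub : (Finset.Icc 1 N).filter (fun n => x n < b)
        ⊆ ((Finset.Icc 1 N).filter (fun n => t-1 ≤ uWin x K n ∧ uWin x K n ≤ m))
          ∪ ((Finset.Icc 1 N).filter (fun n => 0 ≤ uWin x K n ∧ uWin x K n ≤ t-2)) := by
      intro n hn
      rw [Finset.mem_filter] at hn
      have hum : uWin x K n ≤ m := by
        rw [hm]
        exact Nat.floor_le_floor (mul_le_mul_of_nonneg_right hn.2.le (Nat.cast_nonneg K))
      rw [Finset.mem_union, Finset.mem_filter, Finset.mem_filter]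
      rcases le_or_gt (t-1) (uWin x K n) with h | h
      · exact Or.inl ⟨hn.1, h, hum⟩
      · exact Or.inr ⟨hn.1, Nat.zero_le _, by omega⟩
    exact le_trans (Finset.card_le_card hsub) (Finset.card_union_le _ _)
  have hNle : N ≤ Ab + (A2 + E2) := by
    have hcompl := Finset.card_filter_add_card_filter_not
      (s := Finset.Icc 1 N) (p := fun n => x n < b)
    have hsub : (Finset.Icc 1 N).filter (fun n => ¬ x n < b)
        ⊆ ((Finset.Icc 1 N).filter (fun n => m+t ≤ uWin x K n ∧ uWin x K n ≤ K-1))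
          ∪ ((Finset.Icc 1 N).filter (fun n => m ≤ uWin x K n ∧ uWin x K n ≤ m+t-1)) := by
      intro n hn
      rw [Finset.mem_filter] at hn
      have hbx : b ≤ x n := not_lt.mp hn.2
      have hmu : m ≤ uWin x K n := by
        rw [hm]
        exact Nat.floor_le_floor (mul_le_mul_of_nonneg_right hbx (Nat.cast_nonneg K))
      have huK := hu n
      rw [Finset.mem_union, Finset.mem_filter, Finset.mem_filter]
      rcases le_or_gt (m+t) (uWin x K n) with h | h
      · exact Or.inl ⟨hn.1, h, by omega⟩
      · exact Or.inr ⟨hn.1, hmu, by omega⟩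
    have h2 : ((Finset.Icc 1 N).filter (fun n => ¬ x n < b)).card ≤ A2 + E2 :=
      le_trans (Finset.card_le_card hsub) (Finset.card_union_le _ _)
    have h3 : (Finset.Icc 1 N).card = N := by rw [Nat.card_Icc]; omega
    omega
  -- block sums
  set T1 := ∑ w ∈ Finset.Icc 0 m, (Sblk x N K t w : ℝ)^2 with hT1def
  set T2 := ∑ w ∈ Finset.Icc (m+1) (K-1), (Sblk x N K t w : ℝ)^2 with hT2def
  have hT1nn : 0 ≤ T1 := Finset.sum_nonneg (fun w _ => by positivity)
  have hT2nn : 0 ≤ T2 := Finset.sum_nonneg (fun w _ => by positivity)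
  have key1 : (t:ℝ)^2 * (max (((Ab:ℕ):ℝ) - (E1:ℝ)) 0)^2 ≤ ((m:ℝ)+1) * T1 := by
    have hmax1 : max (((Ab:ℕ):ℝ) - (E1:ℝ)) 0 ≤ (A1:ℝ) := by
      apply max_le _ (Nat.cast_nonneg _)
      have : (Ab:ℝ) ≤ (A1:ℝ) + (E1:ℝ) := by exact_mod_cast hAb
      linarith
    have hGe : (t:ℝ) * A1 ≤ ∑ w ∈ Finset.Icc 0 m, (Sblk x N K t w : ℝ) := by
      have h := lemA x N K t 0 m (by omega)
      rw [Nat.zero_add] at h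
      rw [hA1def]
      exact_mod_cast h
    have hCS := sq_sum_le_card_mul_sum_sq
      (s := Finset.Icc 0 m) (f := fun w => (Sblk x N K t w : ℝ))
    have hcard : ((Finset.Icc 0 m).card : ℝ) = (m:ℝ) + 1 := by
      rw [Nat.card_Icc]; push_cast; ring
    calc (t:ℝ)^2 * (max (((Ab:ℕ):ℝ) - (E1:ℝ)) 0)^2
        = ((t:ℝ) * max (((Ab:ℕ):ℝ) - (E1:ℝ)) 0)^2 := by ring
      _ ≤ ((t:ℝ) * A1)^2 := by
          apply pow_le_pow_left₀ (by positivity)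
          exact mul_le_mul_of_nonneg_left hmax1 (Nat.cast_nonneg t)
      _ ≤ (∑ w ∈ Finset.Icc 0 m, (Sblk x N K t w : ℝ))^2 := by
          apply pow_le_pow_left₀ (by positivity) hGe
      _ ≤ ((Finset.Icc 0 m).card : ℝ) * T1 := hCS
      _ = ((m:ℝ)+1) * T1 := by rw [hcard]
  have key2 : (t:ℝ)^2 * (max ((N:ℝ) - (Ab:ℝ) - (E2:ℝ)) 0)^2 ≤ ((K:ℝ) - m) * T2 := by
    have hmax2 : max ((N:ℝ) - (Ab:ℝ) - (E2:ℝ)) 0 ≤ (A2:ℝ) := by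
      apply max_le _ (Nat.cast_nonneg _)
      have : (N:ℝ) ≤ (Ab:ℝ) + ((A2:ℝ) + (E2:ℝ)) := by exact_mod_cast hNle
      linarith
    have hGe : (t:ℝ) * A2 ≤ ∑ w ∈ Finset.Icc (m+1) (K-1), (Sblk x N K t w : ℝ) := by
      have h := lemA x N K t (m+1) (K-1) (by omega)
      have heq : (m+1) + (t-1) = m + t := by omega
      rw [heq] at h
      rw [hA2def]
      exact_mod_cast h
    have hCS := sq_sum_le_card_mul_sum_sq
      (s := Finset.Icc (m+1) (K-1)) (f := fun w => (Sblk x N K t w : ℝ))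
    have hcard : ((Finset.Icc (m+1) (K-1)).card : ℝ) ≤ (K:ℝ) - m := by
      rw [Nat.card_Icc]
      have h1 : K - 1 + 1 - (m + 1) ≤ K - m := by omega
      have h2 : ((K - m : ℕ) : ℝ) = (K:ℝ) - m := by
        rw [Nat.cast_sub hmK.le]
      calc ((K - 1 + 1 - (m + 1) : ℕ) : ℝ) ≤ ((K - m : ℕ) : ℝ) := by exact_mod_cast h1
        _ = (K:ℝ) - m := h2
    calc (t:ℝ)^2 * (max ((N:ℝ) - (Ab:ℝ) - (E2:ℝ)) 0)^2
        = ((t:ℝ) * max ((N:ℝ) - (Ab:ℝ) - (E2:ℝ)) 0)^2 := by ring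
      _ ≤ ((t:ℝ) * A2)^2 := by
          apply pow_le_pow_left₀ (by positivity)
          exact mul_le_mul_of_nonneg_left hmax2 (Nat.cast_nonneg t)
      _ ≤ (∑ w ∈ Finset.Icc (m+1) (K-1), (Sblk x N K t w : ℝ))^2 := by
          apply pow_le_pow_left₀ (by positivity) hGe
      _ ≤ ((Finset.Icc (m+1) (K-1)).card : ℝ) * T2 := hCS
      _ ≤ ((K:ℝ) - m) * T2 := mul_le_mul_of_nonneg_right hcard hT2nn
  have hsum : T1 + T2 = ∑ w ∈ Finset.range K, (Sblk x N K t w : ℝ)^2 := by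
    have hKK : K - 1 + 1 = K := by omega
    rw [hT1def, hT2def]
    rw [← Finset.Ico_add_one_right_eq_Icc (a := 0) (b := m), ← Finset.Ico_add_one_right_eq_Icc (a := m+1) (b := K-1)]
    rw [show K-1+1 = K by omega]
    rw [Finset.sum_Ico_consecutive _ (Nat.zero_le (m+1)) (by omega : m+1 ≤ K)]
    rw [Finset.range_eq_Ico]
  have hUB : ∑ w ∈ Finset.range K, (Sblk x N K t w : ℝ)^2
      ≤ ∑ r ∈ Finset.range t, ((pairCountLe x N (((r:ℝ)+1)/c) : ℝ) + N) := by
    have h := lemUB x (fun n => (hx n).1) N K t c hc0 hcK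
    have hcast : (↑(∑ w ∈ Finset.range K, Sblk x N K t w * Sblk x N K t w) : ℝ)
        ≤ (↑(∑ r ∈ Finset.range t, (pairCountLe x N (((r:ℝ)+1)/c) + N)) : ℝ) := by
      exact_mod_cast h
    push_cast at hcast
    calc ∑ w ∈ Finset.range K, (Sblk x N K t w : ℝ)^2
        = ∑ w ∈ Finset.range K, (Sblk x N K t w : ℝ) * (Sblk x N K t w : ℝ) := by
          exact Finset.sum_congr rfl (fun w _ => sq (Sblk x N K t w : ℝ) ▸ by ring)
      _ ≤ _ := hcast
  have hm1pos : (0:ℝ) < (m:ℝ) + 1 := by positivity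
  have hKmpos : (0:ℝ) < (K:ℝ) - m := by
    have : (m:ℝ) < (K:ℝ) := by exact_mod_cast hmK
    linarith
  have hdiv1 : (t:ℝ)^2 * (max (((Ab:ℕ):ℝ) - (E1:ℝ)) 0)^2 / ((m:ℝ)+1) ≤ T1 := by
    rw [div_le_iff₀ hm1pos]
    linarith [key1]
  have hdiv2 : (t:ℝ)^2 * (max ((N:ℝ) - (Ab:ℝ) - (E2:ℝ)) 0)^2 / ((K:ℝ) - m) ≤ T2 := by
    rw [div_le_iff₀ hKmpos]
    linarith [key2]
  calc (t:ℝ)^2 * (max (((Ab:ℕ):ℝ) - (E1:ℝ)) 0)^2 / ((m:ℝ)+1)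
      + (t:ℝ)^2 * (max ((N:ℝ) - (Ab:ℝ) - (E2:ℝ)) 0)^2 / ((K:ℝ) - m)
      ≤ T1 + T2 := add_le_add hdiv1 hdiv2
    _ = ∑ w ∈ Finset.range K, (Sblk x N K t w : ℝ)^2 := hsum
    _ ≤ _ := hUB

lemma sumId (t : ℕ) : ∑ r ∈ Finset.range t, (2*((r:ℝ)+1)) = (t:ℝ)^2 + (t:ℝ) := by
  induction t with
  | zero => simp
  | succ n ih =>
    rw [Finset.sum_range_succ, ih]
    push_cast
    ring

lemma ratio_zero (E P n : ℕ → ℕ) (L : ℝ) (α : ℝ) (hα0 : 0 < α)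
    (hn : Filter.Tendsto (fun j => (n j : ℝ)) Filter.atTop Filter.atTop)
    (hP : Filter.Tendsto (fun j => (P j : ℝ)/(n j:ℝ)^((2:ℝ)-α)) Filter.atTop (nhds L))
    (hEP : ∀ᶠ j in Filter.atTop, E j * E j ≤ P j + E j)
    (hEn : ∀ j, E j ≤ n j) :
    Filter.Tendsto (fun j => (E j:ℝ)/(n j:ℝ)) Filter.atTop (nhds 0) := by
  have hw : Filter.Tendsto
      (fun j => (P j : ℝ)/(n j:ℝ)^((2:ℝ)-α) * ((n j:ℝ)^α)⁻¹ + ((n j:ℝ))⁻¹)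
      Filter.atTop (nhds 0) := by
    have h1 : Filter.Tendsto (fun j => ((n j:ℝ)^α)⁻¹) Filter.atTop (nhds 0) :=
      ((tendsto_rpow_atTop hα0).comp hn).inv_tendsto_atTop
    have h2 : Filter.Tendsto (fun j => ((n j:ℝ))⁻¹) Filter.atTop (nhds 0) :=
      hn.inv_tendsto_atTop
    have := (hP.mul h1).add h2
    simpa using this
  have hge1 : ∀ᶠ j in Filter.atTop, (1:ℝ) ≤ (n j:ℝ) := hn.eventually_ge_atTop 1
  have hsq : Filter.Tendsto (fun j => ((E j:ℝ)/(n j:ℝ))^2) Filter.atTop (nhds 0) := by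
    apply tendsto_of_tendsto_of_tendsto_of_le_of_le' tendsto_const_nhds hw
    · filter_upwards with j
      positivity
    · filter_upwards [hge1, hEP] with j hj hEPj
      have hnpos : (0:ℝ) < (n j:ℝ) := lt_of_lt_of_le one_pos hj
      have hkey : (n j:ℝ)^((2:ℝ)-α) * (n j:ℝ)^α = (n j:ℝ)^2 := by
        have hx2 : ((2:ℝ)-α) + α = ((2:ℕ):ℝ) := by push_cast; ring
        rw [← Real.rpow_add hnpos, hx2, Real.rpow_natCast]
      have hE2 : ((E j:ℝ))^2 ≤ (P j:ℝ) + (n j:ℝ) := by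
        have h1 : (E j:ℝ) * E j ≤ (P j:ℝ) + E j := by exact_mod_cast hEPj
        have h2 : (E j:ℝ) ≤ (n j:ℝ) := by exact_mod_cast hEn j
        nlinarith
      have hrw : ((E j:ℝ)/(n j:ℝ))^2 = ((E j:ℝ))^2/((n j:ℝ))^2 := by
        rw [div_pow]
      rw [hrw]
      have hnne : (n j:ℝ) ≠ 0 := ne_of_gt hnpos
      have h1 : (P j:ℝ)/((n j:ℝ))^2 = (P j:ℝ)/(n j:ℝ)^((2:ℝ)-α) * ((n j:ℝ)^α)⁻¹ := by
        rw [← hkey, div_mul_eq_div_div, div_eq_mul_inv]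
      have h2 : ((n j:ℝ))/((n j:ℝ))^2 = ((n j:ℝ))⁻¹ := by
        rw [sq, div_mul_eq_div_div, div_self hnne, one_div]
      have hsplit : ((P j:ℝ) + (n j:ℝ))/((n j:ℝ))^2
          = (P j : ℝ)/(n j:ℝ)^((2:ℝ)-α) * ((n j:ℝ)^α)⁻¹ + ((n j:ℝ))⁻¹ := by
        rw [add_div, h1, h2]
      rw [← hsplit]
      apply div_le_div_of_nonneg_right hE2 ?_ |>.trans_eq rfl
      · positivity
  have hnn : ∀ j, 0 ≤ (E j:ℝ)/(n j:ℝ) := fun j => by positivity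
  have := hsq.sqrt
  rw [Real.sqrt_zero] at this
  refine this.congr (fun j => ?_)
  rw [Real.sqrt_sq (hnn j)]

set_option maxHeartbeats 2000000 in
lemma lemKey (x : ℕ → ℝ) (hx : ∀ n, x n ∈ Set.Ico (0 : ℝ) 1)
    (α : ℝ) (hα0 : 0 < α) (hα1 : α < 1)
    (hnv : ∀ s : ℝ, 0 < s → Filter.Tendsto
      (fun N : ℕ => (pairCountLe x N (s / (N : ℝ) ^ α) : ℝ) / (N : ℝ) ^ ((2 : ℝ) - α))
      Filter.atTop (nhds (2 * s)))
    (b : ℝ) (hb0 : 0 < b) (hb1 : b < 1) :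
    Filter.Tendsto
      (fun N : ℕ => (((Finset.Icc 1 N).filter (fun n => x n < b)).card : ℝ) / (N : ℝ))
      Filter.atTop (nhds b) := by
  classical
  set f : ℕ → ℝ := fun N : ℕ => (((Finset.Icc 1 N).filter (fun n => x n < b)).card : ℝ) / (N : ℝ)
    with hfdef
  by_contra hcon
  rw [Metric.tendsto_atTop] at hcon
  push_neg at hcon
  obtain ⟨ε, hε, hfreq⟩ := hcon
  obtain ⟨φ, hφmono, hφ⟩ := Filter.extraction_of_frequently_atTop
    (Filter.frequently_atTop.mpr hfreq)
  have hmem : ∀ j, f (φ j) ∈ Set.Icc (0:ℝ) 1 := by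
    intro j
    constructor
    · apply div_nonneg (Nat.cast_nonneg _) (Nat.cast_nonneg _)
    · apply div_le_one_of_le₀
      · have h1 : ((Finset.Icc 1 (φ j)).filter (fun n => x n < b)).card ≤ (Finset.Icc 1 (φ j)).card :=
          Finset.card_filter_le _ _
        have h2 : (Finset.Icc 1 (φ j)).card = φ j := by rw [Nat.card_Icc]; omega
        exact_mod_cast h1.trans_eq h2
      · exact Nat.cast_nonneg _
  obtain ⟨β, hβmem, ψ, hψmono, hψtend⟩ :=
    tendsto_subseq_of_bounded (Metric.isBounded_Icc (0:ℝ) 1) hmem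
  rw [isClosed_Icc.closure_eq] at hβmem
  set σ : ℕ → ℕ := φ ∘ ψ with hσdef
  have hσmono : StrictMono σ := hφmono.comp hψmono
  have hσtop : Filter.Tendsto σ Filter.atTop Filter.atTop := hσmono.tendsto_atTop
  have hNtop : Filter.Tendsto (fun j => (σ j : ℝ)) Filter.atTop Filter.atTop :=
    Filter.Tendsto.comp tendsto_natCast_atTop_atTop hσtop
  have hβj : Filter.Tendsto (fun j => f (σ j)) Filter.atTop (nhds β) := hψtend
  have hβdist : ε ≤ |β - b| := by
    have hd : Filter.Tendsto (fun j => dist (f (σ j)) b) Filter.atTop (nhds (dist β b)) :=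
      hβj.dist tendsto_const_nhds
    have := ge_of_tendsto' hd (fun j => hφ (ψ j))
    rwa [Real.dist_eq] at this
  have hβ0 : 0 ≤ β := hβmem.1
  have hβ1 : β ≤ 1 := hβmem.2
  -- choice of t
  set t : ℕ := ⌊1/(4*ε^2)⌋₊ + 2 with htdef
  have ht2 : 2 ≤ t := by omega
  have htpos : (0:ℝ) < t := by positivity
  have htε : 1/(4*ε^2) < (t:ℝ) := by
    have h1 : 1/(4*ε^2) < (⌊1/(4*ε^2)⌋₊ : ℝ) + 1 := Nat.lt_floor_add_one _
    have h2 : ((⌊1/(4*ε^2)⌋₊ : ℕ) : ℝ) + 2 = (t : ℝ) := by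
      rw [htdef]; push_cast; ring
    linarith
  -- abbreviations
  set Kf : ℕ → ℕ := fun j => ⌈((σ j : ℕ):ℝ)^α⌉₊ with hKfdef
  set mf : ℕ → ℕ := fun j => ⌊b * (Kf j)⌋₊ with hmfdef
  set Abf : ℕ → ℕ := fun j => ((Finset.Icc 1 (σ j)).filter (fun n => x n < b)).card with hAbfdef
  set E1f : ℕ → ℕ := fun j => cnt x (σ j) (Kf j) 0 (t-2) with hE1fdef
  set E2f : ℕ → ℕ := fun j => cnt x (σ j) (Kf j) (mf j) (mf j + t - 1) with hE2fdef
  set Ptf : ℕ → ℕ := fun j => pairCountLe x (σ j) ((t:ℝ)/(σ j:ℝ)^α) with hPtfdef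
  have hev1 : ∀ᶠ j in Filter.atTop, 1 ≤ σ j := hσtop.eventually_ge_atTop 1
  -- limits of P-counts
  have hnvt : Filter.Tendsto (fun j => (Ptf j : ℝ)/(σ j:ℝ)^((2:ℝ)-α))
      Filter.atTop (nhds (2*(t:ℝ))) := by
    have := (hnv (t:ℝ) htpos).comp hσtop
    simpa [Function.comp_def] using this
  have hnvP : ∀ r : ℕ, Filter.Tendsto
      (fun j => (pairCountLe x (σ j) (((r:ℝ)+1)/(σ j:ℝ)^α) : ℝ)/(σ j:ℝ)^((2:ℝ)-α))
      Filter.atTop (nhds (2*((r:ℝ)+1))) := by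
    intro r
    have := (hnv ((r:ℝ)+1) (by positivity)).comp hσtop
    simpa [Function.comp_def] using this
  -- K limits
  have hKge : ∀ j, (σ j:ℝ)^α ≤ (Kf j : ℝ) := fun j => Nat.le_ceil _
  have hKtop : Filter.Tendsto (fun j => (Kf j:ℝ)) Filter.atTop Filter.atTop := by
    apply tendsto_atTop_mono hKge ((tendsto_rpow_atTop hα0).comp hNtop)
  have hKev1 : ∀ᶠ j in Filter.atTop, (1:ℝ) ≤ (Kf j:ℝ) := hKtop.eventually_ge_atTop 1
  have hNαev : ∀ᶠ j in Filter.atTop, (1:ℝ) ≤ (σ j:ℝ)^α :=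
    ((tendsto_rpow_atTop hα0).comp hNtop).eventually_ge_atTop 1
  have hKrat : Filter.Tendsto (fun j => (Kf j:ℝ)/(σ j:ℝ)^α) Filter.atTop (nhds 1) := by
    refine tendsto_of_tendsto_of_tendsto_of_le_of_le' (g := fun _ => (1:ℝ))
      (h := fun j => 1 + ((σ j:ℝ)^α)⁻¹) tendsto_const_nhds ?_ ?_ ?_
    · have h1 : Filter.Tendsto (fun j => ((σ j:ℝ)^α)⁻¹) Filter.atTop (nhds 0) :=
        ((tendsto_rpow_atTop hα0).comp hNtop).inv_tendsto_atTop
      have := (tendsto_const_nhds (x := (1:ℝ)) (f := Filter.atTop (α := ℕ))).add h1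
      simpa using this
    · filter_upwards [hNαev] with j hj
      have hpos : (0:ℝ) < (σ j:ℝ)^α := lt_of_lt_of_le one_pos hj
      rw [le_div_iff₀ hpos]
      simpa using hKge j
    · filter_upwards [hNαev] with j hj
      have hpos : (0:ℝ) < (σ j:ℝ)^α := lt_of_lt_of_le one_pos hj
      rw [div_le_iff₀ hpos]
      have hlt : (Kf j : ℝ) < (σ j:ℝ)^α + 1 := Nat.ceil_lt_add_one (by positivity)
      have hinv : ((σ j:ℝ)^α)⁻¹ * ((σ j:ℝ)^α) = 1 := inv_mul_cancel₀ (ne_of_gt hpos)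
      nlinarith [hpos]
  have hKrat' : Filter.Tendsto (fun j => (σ j:ℝ)^α/(Kf j:ℝ)) Filter.atTop (nhds 1) := by
    have := hKrat.inv₀ one_ne_zero
    rw [inv_one] at this
    refine this.congr (fun j => ?_)
    rw [inv_div]
  have hinvK : Filter.Tendsto (fun j => ((Kf j:ℝ))⁻¹) Filter.atTop (nhds 0) :=
    hKtop.inv_tendsto_atTop
  have hmrat : Filter.Tendsto (fun j => (mf j:ℝ)/(Kf j:ℝ)) Filter.atTop (nhds b) := by
    refine tendsto_of_tendsto_of_tendsto_of_le_of_le' (g := fun j => b - ((Kf j:ℝ))⁻¹)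
      (h := fun _ => b) ?_ tendsto_const_nhds ?_ ?_
    · have := (tendsto_const_nhds (x := b) (f := Filter.atTop (α := ℕ))).sub hinvK
      simpa using this
    · filter_upwards [hKev1] with j hj
      have hKpos : (0:ℝ) < (Kf j:ℝ) := lt_of_lt_of_le one_pos hj
      have h1 : b * (Kf j:ℝ) < (mf j:ℝ) + 1 := by
        have := Nat.lt_floor_add_one (b * (Kf j:ℝ))
        exact_mod_cast this
      rw [sub_le_iff_le_add, div_add' _ _ _ (ne_of_gt hKpos)]
      rw [le_div_iff₀ hKpos]
      have : (Kf j:ℝ)⁻¹ * (Kf j:ℝ) = 1 := inv_mul_cancel₀ (ne_of_gt hKpos)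
      nlinarith
    · filter_upwards [hKev1] with j hj
      have hKpos : (0:ℝ) < (Kf j:ℝ) := lt_of_lt_of_le one_pos hj
      rw [div_le_iff₀ hKpos]
      have := Nat.floor_le (a := b * (Kf j:ℝ)) (by positivity)
      linarith [this]
  have hm1rat : Filter.Tendsto (fun j => ((mf j:ℝ)+1)/(Kf j:ℝ)) Filter.atTop (nhds b) := by
    refine tendsto_of_tendsto_of_tendsto_of_le_of_le' (g := fun j => (mf j:ℝ)/(Kf j:ℝ))
      (h := fun j => b + ((Kf j:ℝ))⁻¹) hmrat ?_ ?_ ?_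
    · have := (tendsto_const_nhds (x := b) (f := Filter.atTop (α := ℕ))).add hinvK
      simpa using this
    · filter_upwards [hKev1] with j hj
      have hKpos : (0:ℝ) < (Kf j:ℝ) := lt_of_lt_of_le one_pos hj
      exact (div_le_div_iff_of_pos_right hKpos).mpr (by linarith)
    · filter_upwards [hKev1] with j hj
      have hKpos : (0:ℝ) < (Kf j:ℝ) := lt_of_lt_of_le one_pos hj
      have h1 : (mf j:ℝ) ≤ b * (Kf j:ℝ) := Nat.floor_le (by positivity)
      rw [div_le_iff₀ hKpos]
      have : (Kf j:ℝ)⁻¹ * (Kf j:ℝ) = 1 := inv_mul_cancel₀ (ne_of_gt hKpos)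
      nlinarith
  -- strip estimates
  have hE1n : ∀ j, E1f j ≤ σ j := by
    intro j
    have h1 : E1f j ≤ (Finset.Icc 1 (σ j)).card := Finset.card_filter_le _ _
    have h2 : (Finset.Icc 1 (σ j)).card = σ j := by rw [Nat.card_Icc]; omega
    omega
  have hE2n : ∀ j, E2f j ≤ σ j := by
    intro j
    have h1 : E2f j ≤ (Finset.Icc 1 (σ j)).card := Finset.card_filter_le _ _
    have h2 : (Finset.Icc 1 (σ j)).card = σ j := by rw [Nat.card_Icc]; omega
    omega
  have hσposα : ∀ᶠ j in Filter.atTop, (0:ℝ) < (σ j:ℝ)^α := by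
    filter_upwards [hev1] with j hj
    have : (0:ℝ) < (σ j:ℝ) := by exact_mod_cast hj
    positivity
  have hstrip1 : ∀ᶠ j in Filter.atTop, E1f j * E1f j ≤ Ptf j + E1f j := by
    filter_upwards [hσposα] with j hj
    exact lemStrip x (fun n => (hx n).1) (σ j) (Kf j) t 0 (t-2) ((σ j:ℝ)^α)
      hj (Nat.le_ceil _) (by omega)
  have hstrip2 : ∀ᶠ j in Filter.atTop, E2f j * E2f j ≤ Ptf j + E2f j := by
    filter_upwards [hσposα] with j hj
    exact lemStrip x (fun n => (hx n).1) (σ j) (Kf j) t (mf j) (mf j + t - 1) ((σ j:ℝ)^α)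
      hj (Nat.le_ceil _) (by omega)
  have he1 : Filter.Tendsto (fun j => (E1f j:ℝ)/(σ j:ℝ)) Filter.atTop (nhds 0) :=
    ratio_zero E1f Ptf σ (2*(t:ℝ)) α hα0 hNtop hnvt hstrip1 hE1n
  have he2 : Filter.Tendsto (fun j => (E2f j:ℝ)/(σ j:ℝ)) Filter.atTop (nhds 0) :=
    ratio_zero E2f Ptf σ (2*(t:ℝ)) α hα0 hNtop hnvt hstrip2 hE2n
  have haf : Filter.Tendsto (fun j => (Abf j:ℝ)/(σ j:ℝ)) Filter.atTop (nhds β) := hβj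
  -- limits of max terms
  have hmax1 : Filter.Tendsto (fun j => max ((Abf j:ℝ)/(σ j:ℝ) - (E1f j:ℝ)/(σ j:ℝ)) 0)
      Filter.atTop (nhds β) := by
    have := (haf.sub he1).max (tendsto_const_nhds (x := (0:ℝ)))
    simpa [sub_zero, max_eq_left hβ0] using this
  have hmax2 : Filter.Tendsto
      (fun j => max (1 - (Abf j:ℝ)/(σ j:ℝ) - (E2f j:ℝ)/(σ j:ℝ)) 0)
      Filter.atTop (nhds (1 - β)) := by
    have := ((tendsto_const_nhds (x := (1:ℝ)).sub haf).sub he2).max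
      (tendsto_const_nhds (x := (0:ℝ)))
    have hval : max (1 - β - 0) 0 = 1 - β := by
      rw [sub_zero]; exact max_eq_left (by linarith)
    rwa [hval] at this
  -- limits of denominators
  have hKm1 : Filter.Tendsto (fun j => (Kf j:ℝ)/((mf j:ℝ)+1)) Filter.atTop (nhds (1/b)) := by
    have := hm1rat.inv₀ (ne_of_gt hb0)
    rw [← one_div] at this
    refine this.congr (fun j => ?_)
    rw [inv_div]
  have hden1 : Filter.Tendsto (fun j => (σ j:ℝ)^α/((mf j:ℝ)+1)) Filter.atTop (nhds (1/b)) := by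
    have hmul := hKrat'.mul hKm1
    rw [one_mul] at hmul
    apply hmul.congr'
    filter_upwards [hKev1] with j hj
    have hKne : (Kf j:ℝ) ≠ 0 := by linarith
    have hmne : ((mf j:ℝ)+1) ≠ 0 := by positivity
    field_simp
  have hmσα : Filter.Tendsto (fun j => (mf j:ℝ)/(σ j:ℝ)^α) Filter.atTop (nhds b) := by
    have hmul := hmrat.mul hKrat
    rw [mul_one] at hmul
    apply hmul.congr'
    filter_upwards [hKev1] with j hj
    have hKne : (Kf j:ℝ) ≠ 0 := by linarith
    rw [div_mul_div_comm, mul_comm (mf j:ℝ) ((Kf j:ℝ)), mul_div_mul_left _ _ hKne]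
  have hKmσ : Filter.Tendsto (fun j => ((Kf j:ℝ) - (mf j:ℝ))/(σ j:ℝ)^α)
      Filter.atTop (nhds (1 - b)) := by
    have := hKrat.sub hmσα
    refine this.congr (fun j => ?_)
    rw [← sub_div]
  have hden2 : Filter.Tendsto (fun j => (σ j:ℝ)^α/((Kf j:ℝ) - (mf j:ℝ)))
      Filter.atTop (nhds (1/(1-b))) := by
    have := hKmσ.inv₀ (by intro h; rw [sub_eq_zero] at h; linarith)
    rw [← one_div] at this
    refine this.congr (fun j => ?_)
    rw [inv_div]
  -- the main inequality, divided through
  set Dg : ℕ → ℝ := fun j => (σ j:ℝ)^((2:ℝ)-α) with hDgdef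
  set Lg : ℕ → ℝ := fun j =>
    ((t:ℝ)^2 * (max ((Abf j:ℝ) - (E1f j:ℝ)) 0)^2/((mf j:ℝ)+1)
      + (t:ℝ)^2 * (max ((σ j:ℝ) - (Abf j:ℝ) - (E2f j:ℝ)) 0)^2/((Kf j:ℝ) - (mf j:ℝ))) / Dg j
    with hLgdef
  set Ug : ℕ → ℝ := fun j =>
    (∑ r ∈ Finset.range t, ((pairCountLe x (σ j) (((r:ℝ)+1)/(σ j:ℝ)^α) : ℝ) + (σ j:ℝ))) / Dg j
    with hUgdef
  have hDgpos : ∀ᶠ j in Filter.atTop, (0:ℝ) < Dg j := by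
    filter_upwards [hev1] with j hj
    have : (0:ℝ) < (σ j:ℝ) := by exact_mod_cast hj
    positivity
  have hSIev : Lg ≤ᶠ[Filter.atTop] Ug := by
    filter_upwards [hσposα, hDgpos] with j hj hDj
    have hSI := lemSI x hx (σ j) (Kf j) t (mf j) b ((σ j:ℝ)^α)
      hj (Nat.le_ceil _) hb0 hb1 ht2 rfl
    exact (div_le_div_iff_of_pos_right hDj).mpr hSI
  -- upper limit
  have htail : Filter.Tendsto (fun j => (σ j:ℝ) / (Dg j)) Filter.atTop (nhds 0) := by
    have hbase := (tendsto_rpow_neg_atTop (show (0:ℝ) < 1-α by linarith)).comp hNtop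
    apply hbase.congr'
    filter_upwards [hev1] with j hj
    have hσpos : (0:ℝ) < (σ j:ℝ) := by exact_mod_cast hj
    show (σ j:ℝ)^(-(1-α)) = (σ j:ℝ) / (Dg j)
    rw [show -(1-α) = (1:ℝ) - (2-α) by ring, Real.rpow_sub hσpos, Real.rpow_one]
  have hUg : Filter.Tendsto Ug Filter.atTop (nhds ((t:ℝ)^2 + t)) := by
    have heq : ∀ j, Ug j = ∑ r ∈ Finset.range t,
        ((pairCountLe x (σ j) (((r:ℝ)+1)/(σ j:ℝ)^α) : ℝ)/(Dg j) + (σ j:ℝ) / (Dg j)) := by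
      intro j
      rw [hUgdef]
      dsimp only
      rw [Finset.sum_div]
      refine Finset.sum_congr rfl (fun r _ => ?_)
      rw [add_div]
    have hlim : Filter.Tendsto (fun j => ∑ r ∈ Finset.range t,
        ((pairCountLe x (σ j) (((r:ℝ)+1)/(σ j:ℝ)^α) : ℝ)/(Dg j) + (σ j:ℝ) / (Dg j)))
        Filter.atTop (nhds (∑ r ∈ Finset.range t, (2*((r:ℝ)+1) + 0))) := by
      apply tendsto_finset_sum
      intro r _
      exact (hnvP r).add htail
    have hval : (∑ r ∈ Finset.range t, (2*((r:ℝ)+1) + 0)) = (t:ℝ)^2 + t := by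
      simp only [add_zero]
      exact sumId t
    rw [hval] at hlim
    exact hlim.congr (fun j => (heq j).symm)
  -- lower limit
  have hLg : Filter.Tendsto Lg Filter.atTop
      (nhds ((t:ℝ)^2 * β^2 * (1/b) + (t:ℝ)^2 * (1-β)^2 * (1/(1-b)))) := by
    have hlim : Filter.Tendsto (fun j =>
        (t:ℝ)^2 * (max ((Abf j:ℝ)/(σ j:ℝ) - (E1f j:ℝ)/(σ j:ℝ)) 0)^2 * ((σ j:ℝ)^α/((mf j:ℝ)+1))
        + (t:ℝ)^2 * (max (1 - (Abf j:ℝ)/(σ j:ℝ) - (E2f j:ℝ)/(σ j:ℝ)) 0)^2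
          * ((σ j:ℝ)^α/((Kf j:ℝ) - (mf j:ℝ))))
        Filter.atTop
        (nhds ((t:ℝ)^2 * β^2 * (1/b) + (t:ℝ)^2 * (1-β)^2 * (1/(1-b)))) := by
      exact (((tendsto_const_nhds (x := ((t:ℝ)^2))).mul (hmax1.pow 2)).mul hden1).add
        (((tendsto_const_nhds (x := ((t:ℝ)^2))).mul (hmax2.pow 2)).mul hden2)
    apply hlim.congr'
    filter_upwards [hev1, hKev1] with j hj hKj
    have hσpos : (0:ℝ) < (σ j:ℝ) := by exact_mod_cast hj
    have hσne : (σ j:ℝ) ≠ 0 := ne_of_gt hσpos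
    have hKpos : (0:ℝ) < (Kf j:ℝ) := lt_of_lt_of_le one_pos hKj
    have hmKj : (mf j:ℝ) < (Kf j:ℝ) := by
      have h1 : mf j < Kf j := by
        apply (Nat.floor_lt (by positivity)).mpr
        nlinarith
      exact_mod_cast h1
    have hKmne : (Kf j:ℝ) - (mf j:ℝ) ≠ 0 := by linarith
    have hm1ne : ((mf j:ℝ)+1) ≠ 0 := by positivity
    have hDne : Dg j ≠ 0 := by
      rw [hDgdef]; positivity
    have h2α : ((σ j:ℝ)^((2:ℝ)-α)) * ((σ j:ℝ)^α) = (σ j:ℝ)^2 := by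
      rw [← Real.rpow_add hσpos]
      rw [show ((2:ℝ)-α) + α = ((2:ℕ):ℝ) by push_cast; ring, Real.rpow_natCast]
    have hσαne : (σ j:ℝ)^α ≠ 0 := by positivity
    have hM1 : max ((Abf j:ℝ) - (E1f j:ℝ)) 0
        = (max ((Abf j:ℝ)/(σ j:ℝ) - (E1f j:ℝ)/(σ j:ℝ)) 0) * (σ j:ℝ) := by
      rw [max_mul_of_nonneg _ _ (le_of_lt hσpos), zero_mul]
      congr 1
      field_simp
    have hM2 : max ((σ j:ℝ) - (Abf j:ℝ) - (E2f j:ℝ)) 0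
        = (max (1 - (Abf j:ℝ)/(σ j:ℝ) - (E2f j:ℝ)/(σ j:ℝ)) 0) * (σ j:ℝ) := by
      rw [max_mul_of_nonneg _ _ (le_of_lt hσpos), zero_mul]
      congr 1
      field_simp
    show _ = Lg j
    rw [hLgdef]
    dsimp only
    rw [hM1, hM2]
    have hDval : Dg j = (σ j:ℝ)^2 / (σ j:ℝ)^α := by
      rw [hDgdef]
      rw [eq_div_iff hσαne]
      exact h2α
    rw [hDval]
    field_simp
  -- combine
  have hfin : (t:ℝ)^2 * β^2 * (1/b) + (t:ℝ)^2 * (1-β)^2 * (1/(1-b)) ≤ (t:ℝ)^2 + t :=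
    le_of_tendsto_of_tendsto hLg hUg hSIev
  -- final contradiction
  have hb1' : (0:ℝ) < 1 - b := by linarith
  have hbb : (0:ℝ) < b*(1-b) := by positivity
  have hid : β^2/b + (1-β)^2/(1-b) = 1 + (β-b)^2/(b*(1-b)) := by
    field_simp
    ring
  have hε2 : ε^2 ≤ (β-b)^2 := by
    have h1 : ε ≤ |β - b| := hβdist
    have h2 : ε^2 ≤ |β-b|^2 := by nlinarith [abs_nonneg (β-b)]
    rwa [sq_abs] at h2
  have hbb4 : b*(1-b) ≤ 1/4 := by nlinarith [sq_nonneg (b - 1/2)]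
  have hdivge : 4*ε^2 ≤ (β-b)^2/(b*(1-b)) := by
    rw [le_div_iff₀ hbb]
    nlinarith
  have hγ : (t:ℝ)^2 * (1 + 4*ε^2) ≤ (t:ℝ)^2 + t := by
    have h1 : (t:ℝ)^2 * (β^2/b + (1-β)^2/(1-b)) ≤ (t:ℝ)^2 + t := by
      have : (t:ℝ)^2 * (β^2/b + (1-β)^2/(1-b))
          = (t:ℝ)^2 * β^2 * (1/b) + (t:ℝ)^2 * (1-β)^2 * (1/(1-b)) := by ring
      linarith [hfin, this.ge, this.le]
    have h2 : (1:ℝ) + 4*ε^2 ≤ β^2/b + (1-β)^2/(1-b) := by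
      rw [hid]; linarith
    nlinarith [sq_nonneg (t:ℝ)]
  have h4 : (1:ℝ) < (t:ℝ) * (4*ε^2) := by
    rw [div_lt_iff₀ (by positivity : (0:ℝ) < 4*ε^2)] at htε
    linarith
  nlinarith [htpos, hγ, h4]

theorem stmt5 (x : ℕ → ℝ) (hx : ∀ n, x n ∈ Set.Ico (0 : ℝ) 1)
    (α : ℝ) (hα0 : 0 < α) (hα1 : α < 1)
    (hnv : ∀ s : ℝ, 0 < s → Filter.Tendsto
      (fun N : ℕ => (pairCountLe x N (s / (N : ℝ) ^ α) : ℝ) / (N : ℝ) ^ ((2 : ℝ) - α))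
      Filter.atTop (nhds (2 * s))) :
    Filter.Tendsto (fun N : ℕ => starDiscrepancy N x) Filter.atTop (nhds 0) := by
  classical
  have hfilter : ∀ (b : ℝ) (N : ℕ), ((Finset.Icc 1 N).filter (fun n => 0 ≤ x n ∧ x n < b))
      = ((Finset.Icc 1 N).filter (fun n => x n < b)) := by
    intro b N
    apply Finset.filter_congr
    intro n _
    simp [(hx n).1]
  have hconv : ∀ b : ℝ, 0 < b → b ≤ 1 → Filter.Tendsto
      (fun N : ℕ => (((Finset.Icc 1 N).filter (fun n => 0 ≤ x n ∧ x n < b)).card : ℝ)/(N:ℝ))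
      Filter.atTop (nhds b) := by
    intro b hb0 hb1
    rcases eq_or_lt_of_le hb1 with heq | hlt
    · subst heq
      have hev : (fun N : ℕ => (((Finset.Icc 1 N).filter
          (fun n => 0 ≤ x n ∧ x n < 1)).card : ℝ)/(N:ℝ)) =ᶠ[Filter.atTop] (fun _ => (1:ℝ)) := by
        filter_upwards [Filter.eventually_ge_atTop 1] with N hN
        have h1 : ((Finset.Icc 1 N).filter (fun n => 0 ≤ x n ∧ x n < 1)) = Finset.Icc 1 N :=
          Finset.filter_true_of_mem (fun n _ => ⟨(hx n).1, (hx n).2⟩)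
        rw [h1, Nat.card_Icc]
        have hNpos : (0:ℝ) < (N:ℝ) := by exact_mod_cast hN
        rw [show N + 1 - 1 = N by omega]
        exact div_self (ne_of_gt hNpos)
      exact (Filter.tendsto_congr' hev.symm).mp tendsto_const_nhds
    · have := lemKey x hx α hα0 hα1 hnv b hb0 hlt
      refine this.congr (fun N => ?_)
      rw [hfilter b N]
  rw [Metric.tendsto_atTop]
  intro ε hε
  set M : ℕ := ⌈(4:ℝ)/ε⌉₊ + 1 with hMdef
  have hM1 : 1 ≤ M := by omega
  have hMpos : (0:ℝ) < (M:ℝ) := by exact_mod_cast hM1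
  have hM4 : (4:ℝ)/ε ≤ (M:ℝ) := by
    have h1 : (4:ℝ)/ε ≤ (⌈(4:ℝ)/ε⌉₊ : ℝ) := Nat.le_ceil _
    have h2 : ((⌈(4:ℝ)/ε⌉₊ : ℕ) : ℝ) ≤ (M:ℝ) := by exact_mod_cast Nat.le_succ _
    linarith
  have hMε : 1/(M:ℝ) ≤ ε/4 := by
    have h4pos : (0:ℝ) < 4/ε := by positivity
    have := one_div_le_one_div_of_le h4pos hM4
    rwa [one_div_div] at this
  have hall : ∀ᶠ N in Filter.atTop, ∀ j ∈ Finset.Icc 1 M,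
      |(((Finset.Icc 1 N).filter (fun n => 0 ≤ x n ∧ x n < (j:ℝ)/(M:ℝ))).card : ℝ)/(N:ℝ)
        - (j:ℝ)/(M:ℝ)| < ε/4 := by
    rw [Filter.eventually_all_finset]
    intro j hj
    rw [Finset.mem_Icc] at hj
    have hj0 : (0:ℝ) < (j:ℝ)/(M:ℝ) := by
      have : (0:ℝ) < (j:ℝ) := by exact_mod_cast hj.1
      positivity
    have hj1 : (j:ℝ)/(M:ℝ) ≤ 1 := by
      rw [div_le_one hMpos]
      exact_mod_cast hj.2
    have := Metric.tendsto_nhds.mp (hconv ((j:ℝ)/(M:ℝ)) hj0 hj1) (ε/4) (by positivity)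
    refine this.mono (fun N hN => ?_)
    rwa [Real.dist_eq] at hN
  obtain ⟨N₀, hN₀⟩ := Filter.eventually_atTop.mp (hall.and (Filter.eventually_ge_atTop 1))
  refine ⟨N₀, fun N hN => ?_⟩
  obtain ⟨hgrid, hN1⟩ := hN₀ N hN
  have hNpos : (0:ℝ) < (N:ℝ) := by exact_mod_cast hN1
  set A : ℝ → ℕ := fun b => ((Finset.Icc 1 N).filter (fun n => 0 ≤ x n ∧ x n < b)).card
    with hAdef
  have hAmono : ∀ b b' : ℝ, b ≤ b' → A b ≤ A b' := by
    intro b b' hbb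
    rw [hAdef]
    dsimp only
    apply Finset.card_le_card
    intro n hn
    rw [Finset.mem_filter] at hn ⊢
    exact ⟨hn.1, hn.2.1, lt_of_lt_of_le hn.2.2 hbb⟩
  have hone : ∀ v ∈ {v : ℝ | ∃ b : ℝ, 0 < b ∧ b ≤ 1 ∧
      v = |((A b : ℝ)) / N - b|}, v ≤ ε/2 := by
    rintro v ⟨b, hb0, hb1, rfl⟩
    set j : ℕ := ⌈b * M⌉₊ with hjdef
    have hj1 : 1 ≤ j := Nat.ceil_pos.mpr (by positivity)
    have hjM : j ≤ M := Nat.ceil_le.mpr (by nlinarith)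
    have hjmem : j ∈ Finset.Icc 1 M := Finset.mem_Icc.mpr ⟨hj1, hjM⟩
    have hbj : b ≤ (j:ℝ)/(M:ℝ) := by
      rw [le_div_iff₀ hMpos]
      exact Nat.le_ceil _
    have hjb : (j:ℝ) < b * M + 1 := Nat.ceil_lt_add_one (by positivity)
    have hgj := hgrid j hjmem
    have hup : (A b : ℝ)/N - b ≤ ε/2 := by
      have h1 : (A b : ℝ) ≤ (A ((j:ℝ)/(M:ℝ)) : ℝ) := by exact_mod_cast hAmono _ _ hbj
      have h2 : (A b : ℝ)/N ≤ (A ((j:ℝ)/(M:ℝ)) : ℝ)/N := by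
        exact (div_le_div_iff_of_pos_right hNpos).mpr h1
      have h3 : (A ((j:ℝ)/(M:ℝ)) : ℝ)/N - (j:ℝ)/(M:ℝ) < ε/4 := by
        have := abs_lt.mp hgj
        linarith [this.2]
      have h4 : ((j:ℝ) - 1)/(M:ℝ) < b := by
        rw [div_lt_iff₀ hMpos]
        linarith
      have h5 : (j:ℝ)/(M:ℝ) - b < 1/(M:ℝ) := by
        have heq : (j:ℝ)/(M:ℝ) - ((j:ℝ)-1)/(M:ℝ) = 1/(M:ℝ) := by
          field_simp
          ring
        linarith
      linarith
    have hlo : b - (A b : ℝ)/N ≤ ε/2 := by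
      rcases eq_or_lt_of_le hj1 with h1j | h1j
      · -- j = 1, b ≤ 1/M
        have hb1M : b ≤ 1/(M:ℝ) := by
          rw [← h1j] at hbj
          simpa using hbj
        have : (0:ℝ) ≤ (A b : ℝ)/N := div_nonneg (Nat.cast_nonneg _) (Nat.cast_nonneg _)
        linarith
      · -- j ≥ 2
        set j' : ℕ := j - 1 with hj'def
        have hj'cast : ((j' : ℕ) : ℝ) = (j:ℝ) - 1 := by
          rw [hj'def]
          have : 1 ≤ j := hj1
          push_cast [Nat.cast_sub this]
          ring
        have hj'mem : j' ∈ Finset.Icc 1 M := Finset.mem_Icc.mpr ⟨by omega, by omega⟩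
        have hgj' := hgrid j' hj'mem
        have hj'b : (j':ℝ)/(M:ℝ) ≤ b := by
          rw [hj'cast, div_le_iff₀ hMpos]
          linarith
        have h1 : (A ((j':ℝ)/(M:ℝ)) : ℝ) ≤ (A b : ℝ) := by exact_mod_cast hAmono _ _ hj'b
        have h2 : (A ((j':ℝ)/(M:ℝ)) : ℝ)/N ≤ (A b : ℝ)/N := (div_le_div_iff_of_pos_right hNpos).mpr h1
        have h3 : (j':ℝ)/(M:ℝ) - (A ((j':ℝ)/(M:ℝ)) : ℝ)/N < ε/4 := by
          have := abs_lt.mp hgj'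
          linarith [this.1]
        have h4 : b - (j':ℝ)/(M:ℝ) ≤ 1/(M:ℝ) := by
          rw [hj'cast]
          have heq : (j:ℝ)/(M:ℝ) - ((j:ℝ)-1)/(M:ℝ) = 1/(M:ℝ) := by
            field_simp
            ring
          linarith
        linarith
    exact abs_le.mpr ⟨by linarith, by linarith⟩
  have hD : starDiscrepancy N x ≤ ε/2 := by
    unfold starDiscrepancy
    exact Real.sSup_le hone (by positivity)
  have hD0 : 0 ≤ starDiscrepancy N x := by
    unfold starDiscrepancy
    apply Real.sSup_nonneg
    rintro v ⟨b, _, _, rfl⟩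
    exact abs_nonneg _
  rw [Real.dist_eq, sub_zero, abs_of_nonneg hD0]
  linarith
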